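/- Let D be a finite abelian group and I ⊆ D a subgroup such that D/I is cyclic; fix a generator φ of D/I. Define the ℤ[D]-module W = {(x, y) ∈ ΔD ⊕ ℤ[D/I] : x̄ = (1 − φ^{-1})·y}, where x̄ denotes the image of x in ℤ[D/I], and define the ℤ[D]-linear map f : W → ℤ[D] by f(x, y) = x + ν_I·ỹ, where ỹ ∈ ℤ[D] is any lift of y (the product ν_I·ỹ does not depend on the choice of lift). Then f is injective, and its cokernel is isomorphic as a ℤ[D]-module to ℤ[D/I]/(g), where g = 1 − φ^{-1} + #I ∈ ℤ[D/I]. -/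

import Mathlib

open MonoidAlgebra

/-- The projection `ℤ[D] → ℤ[D/I]`. -/
noncomputable def toQuot {D : Type} [CommGroup D] (I : Subgroup D) :
    MonoidAlgebra ℤ D →+* MonoidAlgebra ℤ (D ⧸ I) :=
  MonoidAlgebra.mapDomainRingHom ℤ (QuotientGroup.mk' I)

/-- The sum `ν_H = Σ_{σ ∈ H} σ` of the elements of a subgroup `H` in the group algebra. -/
noncomputable def nuElt (R : Type) [CommRing R] {G : Type} [CommGroup G] [Fintype G]
    (H : Subgroup G) : MonoidAlgebra R G :=
  letI := Classical.decPred (· ∈ H)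
  ∑ σ ∈ Finset.univ.filter (· ∈ H), MonoidAlgebra.of R G σ

/-- The augmentation map `ℤ[D] → ℤ`. -/
noncomputable def augMap (D : Type) [CommGroup D] : MonoidAlgebra ℤ D →ₐ[ℤ] ℤ :=
  MonoidAlgebra.lift ℤ ℤ D 1

/-- The `ℤ[D]`-module `W = {(x, y) ∈ ΔD ⊕ ℤ[D/I] : x̄ = (1 − φ⁻¹)·y}`, as a subset of
`ℤ[D] × ℤ[D/I]`. -/
def Wmod {D : Type} [CommGroup D] (I : Subgroup D) (φq : D ⧸ I) :
    Set (MonoidAlgebra ℤ D × MonoidAlgebra ℤ (D ⧸ I)) :=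
  {p | p.1 ∈ RingHom.ker (augMap D) ∧
    toQuot I p.1 = (1 - MonoidAlgebra.of ℤ (D ⧸ I) φq⁻¹) * p.2}

/-- The map `f : W → ℤ[D]`, `f(x, y) = x + ν_I·ỹ`, where `ỹ = Finsupp.mapDomain
Quotient.out y` is the coefficientwise lift of `y` along the section `Quotient.out` of
`D → D/I` (the product `ν_I·ỹ` does not depend on the choice of lift). -/
noncomputable def liftSec {D : Type} [CommGroup D] (I : Subgroup D) :
    MonoidAlgebra ℤ (D ⧸ I) → MonoidAlgebra ℤ D :=
  fun y => MonoidAlgebra.ofCoeff (show (D →₀ ℤ) from Finsupp.mapDomain Quotient.out y.coeff)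

noncomputable def fMap {D : Type} [CommGroup D] [Fintype D] (I : Subgroup D) :
    MonoidAlgebra ℤ D × MonoidAlgebra ℤ (D ⧸ I) → MonoidAlgebra ℤ D :=
  fun p => p.1 + nuElt ℤ I * liftSec I p.2

section Aux

set_option linter.unusedSectionVars false

variable {D : Type} [CommGroup D] (I : Subgroup D)

lemma toQuot_single (d : D) (c : ℤ) :
    toQuot I (MonoidAlgebra.single d c) = MonoidAlgebra.single (↑d : D ⧸ I) c := by
  simp [toQuot, MonoidAlgebra.mapDomainRingHom, Finsupp.mapDomain_single]

lemma liftSec_apply (y : MonoidAlgebra ℤ (D ⧸ I)) :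
    liftSec I y = MonoidAlgebra.mapDomain Quotient.out y := rfl

lemma toQuot_liftSec (y : MonoidAlgebra ℤ (D ⧸ I)) : toQuot I (liftSec I y) = y := by
  show MonoidAlgebra.ofCoeff (Finsupp.mapDomain _ (Finsupp.mapDomain _ y.coeff)) = y
  rw [← Finsupp.mapDomain_comp]
  convert congrArg MonoidAlgebra.ofCoeff (Finsupp.mapDomain_id (v := y.coeff)) using 3
  · rfl
  funext q
  exact Quotient.out_eq q

lemma augMap_apply (x : MonoidAlgebra ℤ D) : augMap D x = x.coeff.sum fun _ c => c := by
  simp [augMap, MonoidAlgebra.lift_apply]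

lemma augMap_liftSec (y : MonoidAlgebra ℤ (D ⧸ I)) :
    augMap D (liftSec I y) = augMap (D ⧸ I) y := by
  rw [augMap_apply, augMap_apply, liftSec_apply]
  exact Finsupp.sum_mapDomain_index (fun _ => rfl) (fun _ _ _ => rfl)

variable [Fintype D]

lemma nuElt_mul_of_coset (d d' : D) (h : (d : D ⧸ I) = (d' : D ⧸ I)) :
    nuElt ℤ I * MonoidAlgebra.of ℤ D d = nuElt ℤ I * MonoidAlgebra.of ℤ D d' := by
  classical
  have hmem : d⁻¹ * d' ∈ I := QuotientGroup.eq.mp h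
  simp only [nuElt, Finset.sum_mul]
  refine Finset.sum_nbij' (fun σ => σ * (d * d'⁻¹)) (fun σ => σ * (d' * d⁻¹)) ?_ ?_ ?_ ?_ ?_
  · intro σ hσ
    simp only [Finset.mem_filter, Finset.mem_univ, true_and] at hσ ⊢
    exact I.mul_mem hσ (by simpa [mul_comm] using I.inv_mem hmem)
  · intro σ hσ
    simp only [Finset.mem_filter, Finset.mem_univ, true_and] at hσ ⊢
    exact I.mul_mem hσ (by simpa [mul_comm] using hmem)
  · intro σ _; group
  · intro σ _; group
  · intro σ _
    simp only [MonoidAlgebra.of_apply, MonoidAlgebra.single_mul_single, one_mul]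
    congr 1
    group

lemma liftSec_add (y z : MonoidAlgebra ℤ (D ⧸ I)) :
    liftSec I (y + z) = liftSec I y + liftSec I z := MonoidAlgebra.mapDomain_add _ _ _

lemma liftSec_single (q : D ⧸ I) (c : ℤ) :
    liftSec I (MonoidAlgebra.single q c) = MonoidAlgebra.single q.out c := MonoidAlgebra.mapDomain_single

lemma nuElt_mul_liftSec_toQuot (z : MonoidAlgebra ℤ D) :
    nuElt ℤ I * liftSec I (toQuot I z) = nuElt ℤ I * z := by
  induction z using MonoidAlgebra.induction_linear with
  | zero => simp [liftSec_apply]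
  | add a b ha hb => rw [map_add, liftSec_add, mul_add, ha, hb, mul_add]
  | single d c =>
      rw [toQuot_single, liftSec_single]
      have h1 : (MonoidAlgebra.single ((d : D ⧸ I)).out c : MonoidAlgebra ℤ D)
          = MonoidAlgebra.of ℤ D ((d : D ⧸ I)).out * MonoidAlgebra.single (1:D) c := by
        simp [MonoidAlgebra.single_mul_single]
      have h2 : (MonoidAlgebra.single d c : MonoidAlgebra ℤ D)
          = MonoidAlgebra.of ℤ D d * MonoidAlgebra.single (1:D) c := by
        simp [MonoidAlgebra.single_mul_single]
      rw [h1, h2, ← mul_assoc, ← mul_assoc,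
        nuElt_mul_of_coset I ((d : D ⧸ I)).out d (by simp)]

lemma toQuot_nuElt : toQuot I (nuElt ℤ I) = (Nat.card I : MonoidAlgebra ℤ (D ⧸ I)) := by
  classical
  rw [nuElt, map_sum]
  have : ∀ σ ∈ Finset.univ.filter (· ∈ I),
      toQuot I (MonoidAlgebra.of ℤ D σ) = 1 := by
    intro σ hσ
    simp only [Finset.mem_filter] at hσ
    rw [MonoidAlgebra.of_apply, toQuot_single]
    rw [show ((σ : D ⧸ I)) = (1 : D ⧸ I) from (QuotientGroup.eq_one_iff σ).mpr hσ.2]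
    rfl
  rw [Finset.sum_congr rfl this]
  simp [Nat.card_eq_fintype_card, Fintype.card_subtype]

lemma augMap_nuElt : augMap D (nuElt ℤ I) = (Nat.card I : ℤ) := by
  classical
  rw [nuElt, map_sum]
  have : ∀ σ ∈ Finset.univ.filter (· ∈ I), augMap D (MonoidAlgebra.of ℤ D σ) = 1 := by
    intro σ _
    rw [MonoidAlgebra.of_apply, augMap_apply]
    simp
  rw [Finset.sum_congr rfl this]
  simp [Nat.card_eq_fintype_card, Fintype.card_subtype]

-- key torsion lemma
lemma key_reg {Q : Type} [CommGroup Q] [Finite Q] (q : Q) (m : ℕ) (hm : 1 ≤ m)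
    (y : MonoidAlgebra ℤ Q)
    (h : (1 - MonoidAlgebra.of ℤ Q q + (m : MonoidAlgebra ℤ Q)) * y = 0) : y = 0 := by
  have step : ∀ k : ℕ, ((1 + m : ℤ) ^ k) • y = (MonoidAlgebra.of ℤ Q q) ^ k * y := by
    intro k
    induction k with
    | zero => simp
    | succ k ih =>
        have h1 : (1 + (m : MonoidAlgebra ℤ Q)) * y = MonoidAlgebra.of ℤ Q q * y := by
          have := h
          ring_nf at this ⊢
          linear_combination this
        calc ((1 + m : ℤ) ^ (k+1)) • y = (1 + (m:ℤ)) • (((1 + m : ℤ) ^ k) • y) := by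
              rw [← mul_smul, pow_succ]; ring_nf
          _ = (1 + (m:ℤ)) • ((MonoidAlgebra.of ℤ Q q) ^ k * y) := by rw [ih]
          _ = (MonoidAlgebra.of ℤ Q q) ^ k * ((1 + (m:ℤ)) • y) := by
              rw [mul_smul_comm]
          _ = (MonoidAlgebra.of ℤ Q q) ^ k * (MonoidAlgebra.of ℤ Q q * y) := by
              congr 1
              rw [← h1]
              push_cast
              rw [zsmul_eq_mul]
              push_cast
              ring
          _ = (MonoidAlgebra.of ℤ Q q) ^ (k+1) * y := by ring
  have hk : orderOf q ≠ 0 := (orderOf_pos q).ne'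
  have := step (orderOf q)
  rw [← map_pow, pow_orderOf_eq_one, map_one, one_mul] at this
  have hne : ((1 + m : ℤ) ^ orderOf q) - 1 ≠ 0 := by
    have : (2:ℤ) ≤ (1 + m : ℤ) := by omega
    have h2 : (2:ℤ)^(orderOf q) ≤ (1+m:ℤ)^(orderOf q) := pow_le_pow_left₀ (by norm_num) this _
    have h3 : (2:ℤ) ≤ 2 ^ (orderOf q) := by
      calc (2:ℤ) = 2^1 := by norm_num
        _ ≤ 2 ^ (orderOf q) := pow_le_pow_right₀ (by norm_num) (by omega)
    omega
  have hzero : (((1 + m : ℤ) ^ orderOf q) - 1) • y = 0 := by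
    rw [sub_smul, this, one_smul, sub_self]
  have hzero' : ((1 + (m:ℤ)) ^ orderOf q - 1) • y.coeff = 0 := congrArg MonoidAlgebra.coeff hzero
  rw [← MonoidAlgebra.coeff_eq_zero]
  ext a
  have h4 := DFunLike.congr_fun hzero' a
  simp only [Finsupp.smul_apply, Finsupp.coe_zero, Pi.zero_apply, smul_eq_mul] at h4
  rcases mul_eq_zero.mp h4 with h' | h'
  · exact absurd h' hne
  · simpa using h'

lemma augMap_toQuot (z : MonoidAlgebra ℤ D) :
    augMap (D ⧸ I) (toQuot I z) = augMap D z := by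
  rw [augMap_apply, augMap_apply]
  show (Finsupp.mapDomain _ z.coeff).sum (fun _ c => c) = _
  exact Finsupp.sum_mapDomain_index (fun _ => rfl) (fun _ _ _ => rfl)

lemma augMap_of (d : D) : augMap D (MonoidAlgebra.of ℤ D d) = 1 := by
  rw [MonoidAlgebra.of_apply, augMap_apply]; simp

lemma liftSec_sub (y z : MonoidAlgebra ℤ (D ⧸ I)) :
    liftSec I (y - z) = liftSec I y - liftSec I z := by
  exact congrArg MonoidAlgebra.ofCoeff ((Finsupp.mapDomain.addMonoidHom Quotient.out).map_sub y.coeff z.coeff)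

theorem compHom_smul_def' {R S M : Type} [Semiring R] [Semiring S] [AddCommMonoid M]
    [Module R M] (f : S →+* R) (s : S) (x : M) :
    letI := Module.compHom M f
    s • x = f s • x := rfl


end Aux

/-- for `I ⊆ D` with `D/I` cyclic with generator `φ`, the map
`f : W → ℤ[D]`, `f(x, y) = x + ν_I·ỹ`, is injective and its cokernel is isomorphic to
`ℤ[D/I]/(g)` as a `ℤ[D]`-module, where `g = 1 − φ⁻¹ + #I`. -/
theorem statement14 {D : Type} [CommGroup D] [Fintype D] (I : Subgroup D)
    (φq : D ⧸ I) (hgen : ∀ x : D ⧸ I, x ∈ Subgroup.zpowers φq) :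
    letI : Module (MonoidAlgebra ℤ D)
        (MonoidAlgebra ℤ (D ⧸ I) ⧸
          Ideal.span {1 - MonoidAlgebra.of ℤ (D ⧸ I) φq⁻¹
            + (Nat.card I : MonoidAlgebra ℤ (D ⧸ I))}) :=
      Module.compHom _ (toQuot I)
    Set.InjOn (fMap I) (Wmod I φq) ∧
    Nonempty ((MonoidAlgebra ℤ D ⧸
        Submodule.span (MonoidAlgebra ℤ D) (fMap I '' Wmod I φq))
      ≃ₗ[MonoidAlgebra ℤ D]
        (MonoidAlgebra ℤ (D ⧸ I) ⧸
          Ideal.span {1 - MonoidAlgebra.of ℤ (D ⧸ I) φq⁻¹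
            + (Nat.card I : MonoidAlgebra ℤ (D ⧸ I))})) := by
  classical
  letI inst : Module (MonoidAlgebra ℤ D)
      (MonoidAlgebra ℤ (D ⧸ I) ⧸
        Ideal.span {1 - MonoidAlgebra.of ℤ (D ⧸ I) φq⁻¹
          + (Nat.card I : MonoidAlgebra ℤ (D ⧸ I))}) :=
    Module.compHom _ (toQuot I)
  have hcard : 1 ≤ Nat.card I := Nat.one_le_iff_ne_zero.mpr Nat.card_pos.ne'
  have hWzero : ∀ p ∈ Wmod I φq, fMap I p = 0 → p = 0 := by
    rintro ⟨x, y⟩ ⟨haug, hcond⟩ hf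
    simp only [fMap] at hf
    have h1 : toQuot I (x + nuElt ℤ I * liftSec I y) = 0 := by rw [hf, map_zero]
    rw [map_add, map_mul, toQuot_nuElt, toQuot_liftSec, hcond] at h1
    have h2 : (1 - MonoidAlgebra.of ℤ (D ⧸ I) φq⁻¹
        + (Nat.card I : MonoidAlgebra ℤ (D ⧸ I))) * y = 0 := by linear_combination h1
    have hy : y = 0 := key_reg φq⁻¹ (Nat.card I) hcard y h2
    have hx : x = 0 := by
      have : liftSec I y = 0 := by rw [hy]; show MonoidAlgebra.mapDomain Quotient.out (0 : MonoidAlgebra ℤ (D ⧸ I)) = 0; simp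
      rw [this, mul_zero, add_zero] at hf
      exact hf
    simp [hx, hy, Prod.ext_iff]
  refine ⟨?_, ?_⟩
  · -- injectivity
    rintro p hp q hq hpq
    have hd : (p.1 - q.1, p.2 - q.2) ∈ Wmod I φq := by
      obtain ⟨h1, h2⟩ := hp
      obtain ⟨h3, h4⟩ := hq
      constructor
      · rw [RingHom.mem_ker] at h1 h3 ⊢
        rw [map_sub, h1, h3, sub_zero]
      · rw [map_sub, h2, h4, ← mul_sub]
    have hf0 : fMap I (p.1 - q.1, p.2 - q.2) = 0 := by
      simp only [fMap] at hpq ⊢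
      rw [liftSec_sub, mul_sub]
      linear_combination hpq
    have := hWzero _ hd hf0
    rw [Prod.ext_iff] at this ⊢
    obtain ⟨e1, e2⟩ := this
    exact ⟨by linear_combination (norm := (simp only []; abel)) e1,
      by linear_combination (norm := (simp only []; abel)) e2⟩
  · -- cokernel
    let θ : MonoidAlgebra ℤ D →ₗ[MonoidAlgebra ℤ D]
        (MonoidAlgebra ℤ (D ⧸ I) ⧸
          Ideal.span {1 - MonoidAlgebra.of ℤ (D ⧸ I) φq⁻¹
            + (Nat.card I : MonoidAlgebra ℤ (D ⧸ I))}) :=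
      { toFun := fun z => Ideal.Quotient.mk _ (toQuot I z)
        map_add' := fun a b => by
          show Ideal.Quotient.mk _ (toQuot I (a + b)) = _
          rw [map_add (toQuot I), RingHom.map_add (Ideal.Quotient.mk _)]
        map_smul' := fun a z => by
          simp only [RingHom.id_apply, smul_eq_mul, map_mul]
          rw [compHom_smul_def']
          rw [← map_mul (Ideal.Quotient.mk _)]
          exact (Submodule.Quotient.mk_smul _ (toQuot I a) (toQuot I z)).symm }
    have θapp : ∀ z, θ z = Ideal.Quotient.mk _ (toQuot I z) := fun _ => rfl
    have hsurj : Function.Surjective θ := by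
      intro c
      obtain ⟨w, hw⟩ := Ideal.Quotient.mk_surjective c
      refine ⟨liftSec I w, ?_⟩
      rw [θapp, toQuot_liftSec, hw]
    have hker : LinearMap.ker θ
        = Submodule.span (MonoidAlgebra ℤ D) (fMap I '' Wmod I φq) := by
      apply le_antisymm
      · intro z hz
        rw [LinearMap.mem_ker, θapp] at hz
        have hz' : toQuot I z ∈ Ideal.span {1 - MonoidAlgebra.of ℤ (D ⧸ I) φq⁻¹
            + (Nat.card I : MonoidAlgebra ℤ (D ⧸ I))} := by
          rwa [← Ideal.Quotient.eq_zero_iff_mem]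
        obtain ⟨y, hy⟩ := Ideal.mem_span_singleton'.mp hz'
        refine Submodule.subset_span ⟨(z - nuElt ℤ I * liftSec I y, y), ⟨?_, ?_⟩, ?_⟩
        · rw [RingHom.mem_ker, map_sub, map_mul]
          have e1 : augMap D z = augMap (D ⧸ I) (y * (1 - MonoidAlgebra.of ℤ (D ⧸ I) φq⁻¹
              + (Nat.card I : MonoidAlgebra ℤ (D ⧸ I)))) := by
            rw [hy, augMap_toQuot]
          have e2 : augMap (D ⧸ I) (1 - MonoidAlgebra.of ℤ (D ⧸ I) φq⁻¹
              + (Nat.card I : MonoidAlgebra ℤ (D ⧸ I))) = (Nat.card I : ℤ) := by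
            rw [map_add, map_sub, map_one]
            have : augMap (D ⧸ I) (MonoidAlgebra.of ℤ (D ⧸ I) φq⁻¹) = 1 := augMap_of _
            rw [this]
            simp
          rw [e1, map_mul, e2, augMap_nuElt, augMap_liftSec]
          ring
        · rw [map_sub, map_mul, toQuot_nuElt, toQuot_liftSec, ← hy]
          ring
        · simp only [fMap]
          ring
      · rw [Submodule.span_le]
        rintro _ ⟨⟨x, y⟩, ⟨haug, hcond⟩, rfl⟩
        rw [SetLike.mem_coe, LinearMap.mem_ker, θapp]
        show Ideal.Quotient.mk _ (toQuot I (x + nuElt ℤ I * liftSec I y)) = 0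
        rw [map_add, map_mul, toQuot_nuElt, toQuot_liftSec, hcond,
          Ideal.Quotient.eq_zero_iff_mem]
        have : (1 - MonoidAlgebra.of ℤ (D ⧸ I) φq⁻¹) * y
            + (Nat.card I : MonoidAlgebra ℤ (D ⧸ I)) * y
            = (1 - MonoidAlgebra.of ℤ (D ⧸ I) φq⁻¹
              + (Nat.card I : MonoidAlgebra ℤ (D ⧸ I))) * y := by ring
        rw [this]
        exact Ideal.mul_mem_right _ _ (Ideal.subset_span rfl)
    have hinj : Function.Injective
        (Submodule.liftQ (Submodule.span (MonoidAlgebra ℤ D) (fMap I '' Wmod I φq))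
          θ (le_of_eq hker.symm)) := by
      rw [← LinearMap.ker_eq_bot]
      exact Submodule.ker_liftQ_eq_bot _ _ _ (le_of_eq hker)
    have hsurj' : Function.Surjective
        (Submodule.liftQ (Submodule.span (MonoidAlgebra ℤ D) (fMap I '' Wmod I φq))
          θ (le_of_eq hker.symm)) := by
      intro c
      obtain ⟨w, hw⟩ := hsurj c
      exact ⟨Submodule.Quotient.mk w, hw⟩
    have e : (MonoidAlgebra ℤ D ⧸
        Submodule.span (MonoidAlgebra ℤ D) (fMap I '' Wmod I φq))
      ≃ₗ[MonoidAlgebra ℤ D]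
        (MonoidAlgebra ℤ (D ⧸ I) ⧸
          Ideal.span {1 - MonoidAlgebra.of ℤ (D ⧸ I) φq⁻¹
            + (Nat.card I : MonoidAlgebra ℤ (D ⧸ I))}) :=
      LinearEquiv.ofBijective _ ⟨hinj, hsurj'⟩
    exact ⟨e⟩
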